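/- Let (x*, y*) be a weak K(s)-optimal pair with X ⊆ ℝᵏ, each Fᵢ differentiable, y* an interior point of X, and G(x*) = 0 with y* attaining the supremum. Then ∑ᵢ Fᵢ'(y*)·[∑ⱼ Δⱼ*(y*) − s²n·Δᵢ*(y*)] = 0 and ∑ᵢ Δᵢ*(y*) − s√n·‖F(y*) − F(x*)‖ = 0, where Δᵢ*(y) = Fᵢ(y) − Fᵢ(x*). -/

import Mathlib

open InnerProductSpace


/-- First-order necessary conditions at a weak `K(s)`-optimal pair
`(xs, ys)`: `∑ᵢ [∑ⱼ Δⱼ*(ys) - s²n Δᵢ*(ys)] ∇Fᵢ(ys) = 0` and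
`∑ᵢ Δᵢ*(ys) - s√n ‖F(ys) - F(xs)‖ = 0`. -/
theorem stmt16 (n k : ℕ) (s : ℝ) (hs : s ∈ Set.Ioo (0 : ℝ) 1)
    (X : Set (EuclideanSpace ℝ (Fin k)))
    (F : EuclideanSpace ℝ (Fin k) → EuclideanSpace ℝ (Fin n))
    (g : Fin n → EuclideanSpace ℝ (Fin k))
    (xs ys : EuclideanSpace ℝ (Fin k))
    (hxs : xs ∈ X) (hysX : ys ∈ X) (hysint : ys ∈ interior X)
    (hdiff : ∀ i, HasGradientAt (fun x => F x i) (g i) ys)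
    -- `G(xs) = 0` : the supremum of `φ` over `X` is `0` (attained at `y = xs`)
    (hG : ∀ y ∈ X, ∑ i, (F y i - F xs i) - s * Real.sqrt n * ‖F y - F xs‖ ≤ 0)
    -- `ys` attains the supremum in the definition of `G(xs)`
    (hysmax : ∀ y ∈ X, ∑ i, (F y i - F xs i) - s * Real.sqrt n * ‖F y - F xs‖ ≤
        ∑ i, (F ys i - F xs i) - s * Real.sqrt n * ‖F ys - F xs‖) :
    (∑ i, (∑ j, (F ys j - F xs j) - s ^ 2 * n * (F ys i - F xs i)) • g i = 0) ∧
      ∑ i, (F ys i - F xs i) - s * Real.sqrt n * ‖F ys - F xs‖ = 0 := by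
  have h2 : ∑ i, (F ys i - F xs i) - s * Real.sqrt n * ‖F ys - F xs‖ = 0 := by
    refine le_antisymm (hG ys hysX) ?_
    have h := hysmax xs hxs
    simpa using h
  refine ⟨?_, h2⟩
  by_cases hne : F ys = F xs
  · simp [hne]
  · set L : Fin n → (EuclideanSpace ℝ (Fin k) →L[ℝ] ℝ) :=
      fun i => toDual ℝ (EuclideanSpace ℝ (Fin k)) (g i) with hLdef
    have hL : ∀ i, HasFDerivAt (fun x => F x i) (L i) ys := fun i => (hdiff i).hasFDerivAt
    set q : EuclideanSpace ℝ (Fin k) → ℝ := fun y => ∑ i, (F y i - F xs i)^2 with hqdef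
    have hnorm : ∀ y, ‖F y - F xs‖ = Real.sqrt (q y) := by
      intro y
      simp [EuclideanSpace.norm_eq, hqdef, sq_abs]
    set c : ℝ := ‖F ys - F xs‖ with hcdef
    have hc : 0 < c := norm_pos_iff.mpr (sub_ne_zero.mpr hne)
    have hQpos : 0 < q ys := Real.sqrt_pos.mp (by rw [← hnorm ys]; exact hc)
    have hcQ : Real.sqrt (q ys) = c := (hnorm ys).symm
    have hsq : ∀ i, HasFDerivAt (fun y => (F y i - F xs i)^2)
        ((2 * (F ys i - F xs i)) • L i) ys := by
      intro i
      have h1 : HasFDerivAt (fun y => F y i - F xs i) (L i) ys := (hL i).sub_const _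
      have hmul := h1.mul h1
      have e1 : (fun y => (F y i - F xs i)^2) = fun y => (F y i - F xs i) * (F y i - F xs i) := by
        funext y; ring
      have e2 : (2 * (F ys i - F xs i)) • L i
          = (F ys i - F xs i) • L i + (F ys i - F xs i) • L i := by
        rw [two_mul, add_smul]
      rw [e1, e2]; exact hmul
    have hq : HasFDerivAt q (∑ i, (2 * (F ys i - F xs i)) • L i) ys :=
      HasFDerivAt.fun_sum fun i _ => hsq i
    have hsqrt : HasFDerivAt (fun y => Real.sqrt (q y))
        ((1 / (2 * c)) • ∑ i, (2 * (F ys i - F xs i)) • L i) ys := by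
      have h := (Real.hasDerivAt_sqrt (ne_of_gt hQpos)).comp_hasFDerivAt ys hq
      rwa [hcQ] at h
    set D : EuclideanSpace ℝ (Fin k) →L[ℝ] ℝ :=
      (∑ i, L i) - (s * Real.sqrt n) •
        ((1 / (2 * c)) • ∑ i, (2 * (F ys i - F xs i)) • L i) with hDdef
    have hψ : HasFDerivAt
        (fun y => ∑ i, (F y i - F xs i) - s * Real.sqrt n * Real.sqrt (q y)) D ys :=
      (HasFDerivAt.fun_sum fun i _ => (hL i).sub_const _).sub (hsqrt.const_mul _)
    have hlm : IsLocalMax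
        (fun y => ∑ i, (F y i - F xs i) - s * Real.sqrt n * Real.sqrt (q y)) ys := by
      refine Filter.mem_of_superset (mem_interior_iff_mem_nhds.mp hysint) fun y hy => ?_
      have h := hysmax y hy
      simp only [Set.mem_setOf_eq, ← hnorm y, ← hnorm ys]
      exact h
    have hD0 : D = 0 := hlm.hasFDerivAt_eq_zero hψ
    have hT : ∑ j, (F ys j - F xs j) = s * Real.sqrt n * c := by
      linarith [h2]
    have hn2 : ((n : ℝ)) = Real.sqrt n ^ 2 := (Real.sq_sqrt (Nat.cast_nonneg n)).symm
    apply (toDual ℝ (EuclideanSpace ℝ (Fin k))).injective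
    rw [map_zero, map_sum]
    have key : ∀ i, toDual ℝ (EuclideanSpace ℝ (Fin k))
        ((∑ j, (F ys j - F xs j) - s ^ 2 * n * (F ys i - F xs i)) • g i)
        = (∑ j, (F ys j - F xs j) - s ^ 2 * n * (F ys i - F xs i)) • L i := fun i => by
      rw [hLdef]; exact map_smul _ _ _
    rw [Finset.sum_congr rfl fun i _ => key i]
    have : (∑ i, (∑ j, (F ys j - F xs j) - s ^ 2 * n * (F ys i - F xs i)) • L i)
        = (s * Real.sqrt n * c) • D := by
      ext v
      simp only [hDdef, ContinuousLinearMap.coe_sum', Finset.sum_apply,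
        ContinuousLinearMap.coe_smul', Pi.smul_apply, ContinuousLinearMap.coe_sub',
        Pi.sub_apply, smul_eq_mul, Finset.mul_sum]
      rw [mul_sub, Finset.mul_sum, Finset.mul_sum, ← Finset.sum_sub_distrib]
      refine Finset.sum_congr rfl fun i _ => ?_
      rw [hT]
      field_simp
      linear_combination (-(s^2 * (F ys i - F xs i) * ((L i) v))) * hn2
    rw [this, hD0, smul_zero]
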